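/- The function K = (ω₁² − ω₂² + α₁ − β₂)² + (2ω₁ω₂ + α₂ + β₁)² is a first integral of the Kowalevski two-field equations: at every point of ℝ⁹, the directional derivative of K along the vector field of the equations vanishes. -/

import Mathlib

noncomputable section

/-- Cross product on ℝ³ (represented as `ℝ × ℝ × ℝ`). -/
def cross3 (u v : ℝ × ℝ × ℝ) : ℝ × ℝ × ℝ :=
  (u.2.1 * v.2.2 - u.2.2 * v.2.1,
   u.2.2 * v.1 - u.1 * v.2.2,
   u.1 * v.2.1 - u.2.1 * v.1)

/-- The vector field of the Kowalevski two-field equations on ℝ⁹ = ℝ³ × ℝ³ × ℝ³,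
with coordinates `(ω, α, β)`:
`2ω̇₁ = ω₂ω₃ + β₃`, `2ω̇₂ = −ω₁ω₃ − α₃`, `ω̇₃ = α₂ − β₁`, `α̇ = α × ω`, `β̇ = β × ω`. -/
def kowField (v : (ℝ × ℝ × ℝ) × (ℝ × ℝ × ℝ) × (ℝ × ℝ × ℝ)) :
    (ℝ × ℝ × ℝ) × (ℝ × ℝ × ℝ) × (ℝ × ℝ × ℝ) :=
  (((v.1.2.1 * v.1.2.2 + v.2.2.2.2) / 2,
    (-(v.1.1 * v.1.2.2) - v.2.1.2.2) / 2,
    v.2.1.2.1 - v.2.2.1),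
   cross3 v.2.1 v.1,
   cross3 v.2.2 v.1)

/-- The Kowalevski-type integral `K = (ω₁² − ω₂² + α₁ − β₂)² + (2ω₁ω₂ + α₂ + β₁)²`. -/
def Kfun (v : (ℝ × ℝ × ℝ) × (ℝ × ℝ × ℝ) × (ℝ × ℝ × ℝ)) : ℝ :=
  (v.1.1 ^ 2 - v.1.2.1 ^ 2 + v.2.1.1 - v.2.2.2.1) ^ 2
    + (2 * v.1.1 * v.1.2.1 + v.2.1.2.1 + v.2.2.1) ^ 2

set_option maxHeartbeats 2000000 in
/-- `K` is a first integral of the Kowalevski two-field equations: at every point of ℝ⁹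
the directional derivative of `K` along the vector field of the equations vanishes. -/
theorem K_first_integral :
    ∀ v : (ℝ × ℝ × ℝ) × (ℝ × ℝ × ℝ) × (ℝ × ℝ × ℝ),
      fderiv ℝ Kfun v (kowField v) = 0 := by
  intro v
  have hw1 : HasFDerivAt (fun v : (ℝ×ℝ×ℝ)×(ℝ×ℝ×ℝ)×(ℝ×ℝ×ℝ) => v.1.1)
      ((ContinuousLinearMap.fst ℝ ℝ (ℝ×ℝ)).comp (ContinuousLinearMap.fst ℝ (ℝ×ℝ×ℝ) ((ℝ×ℝ×ℝ)×(ℝ×ℝ×ℝ)))) v :=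
    ((ContinuousLinearMap.fst ℝ ℝ (ℝ×ℝ)).comp (ContinuousLinearMap.fst ℝ (ℝ×ℝ×ℝ) ((ℝ×ℝ×ℝ)×(ℝ×ℝ×ℝ)))).hasFDerivAt
  have hw2 : HasFDerivAt (fun v : (ℝ×ℝ×ℝ)×(ℝ×ℝ×ℝ)×(ℝ×ℝ×ℝ) => v.1.2.1)
      (((ContinuousLinearMap.fst ℝ ℝ ℝ).comp (ContinuousLinearMap.snd ℝ ℝ (ℝ×ℝ))).comp (ContinuousLinearMap.fst ℝ (ℝ×ℝ×ℝ) ((ℝ×ℝ×ℝ)×(ℝ×ℝ×ℝ)))) v :=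
    (((ContinuousLinearMap.fst ℝ ℝ ℝ).comp (ContinuousLinearMap.snd ℝ ℝ (ℝ×ℝ))).comp (ContinuousLinearMap.fst ℝ (ℝ×ℝ×ℝ) ((ℝ×ℝ×ℝ)×(ℝ×ℝ×ℝ)))).hasFDerivAt
  have ha1 : HasFDerivAt (fun v : (ℝ×ℝ×ℝ)×(ℝ×ℝ×ℝ)×(ℝ×ℝ×ℝ) => v.2.1.1)
      (((ContinuousLinearMap.fst ℝ ℝ (ℝ×ℝ)).comp (ContinuousLinearMap.fst ℝ (ℝ×ℝ×ℝ) (ℝ×ℝ×ℝ))).comp (ContinuousLinearMap.snd ℝ (ℝ×ℝ×ℝ) ((ℝ×ℝ×ℝ)×(ℝ×ℝ×ℝ)))) v :=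
    (((ContinuousLinearMap.fst ℝ ℝ (ℝ×ℝ)).comp (ContinuousLinearMap.fst ℝ (ℝ×ℝ×ℝ) (ℝ×ℝ×ℝ))).comp (ContinuousLinearMap.snd ℝ (ℝ×ℝ×ℝ) ((ℝ×ℝ×ℝ)×(ℝ×ℝ×ℝ)))).hasFDerivAt
  have ha2 : HasFDerivAt (fun v : (ℝ×ℝ×ℝ)×(ℝ×ℝ×ℝ)×(ℝ×ℝ×ℝ) => v.2.1.2.1)
      ((((ContinuousLinearMap.fst ℝ ℝ ℝ).comp (ContinuousLinearMap.snd ℝ ℝ (ℝ×ℝ))).comp (ContinuousLinearMap.fst ℝ (ℝ×ℝ×ℝ) (ℝ×ℝ×ℝ))).comp (ContinuousLinearMap.snd ℝ (ℝ×ℝ×ℝ) ((ℝ×ℝ×ℝ)×(ℝ×ℝ×ℝ)))) v :=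
    ((((ContinuousLinearMap.fst ℝ ℝ ℝ).comp (ContinuousLinearMap.snd ℝ ℝ (ℝ×ℝ))).comp (ContinuousLinearMap.fst ℝ (ℝ×ℝ×ℝ) (ℝ×ℝ×ℝ))).comp (ContinuousLinearMap.snd ℝ (ℝ×ℝ×ℝ) ((ℝ×ℝ×ℝ)×(ℝ×ℝ×ℝ)))).hasFDerivAt
  have hb1 : HasFDerivAt (fun v : (ℝ×ℝ×ℝ)×(ℝ×ℝ×ℝ)×(ℝ×ℝ×ℝ) => v.2.2.1)
      (((ContinuousLinearMap.fst ℝ ℝ (ℝ×ℝ)).comp (ContinuousLinearMap.snd ℝ (ℝ×ℝ×ℝ) (ℝ×ℝ×ℝ))).comp (ContinuousLinearMap.snd ℝ (ℝ×ℝ×ℝ) ((ℝ×ℝ×ℝ)×(ℝ×ℝ×ℝ)))) v :=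
    (((ContinuousLinearMap.fst ℝ ℝ (ℝ×ℝ)).comp (ContinuousLinearMap.snd ℝ (ℝ×ℝ×ℝ) (ℝ×ℝ×ℝ))).comp (ContinuousLinearMap.snd ℝ (ℝ×ℝ×ℝ) ((ℝ×ℝ×ℝ)×(ℝ×ℝ×ℝ)))).hasFDerivAt
  have hb2 : HasFDerivAt (fun v : (ℝ×ℝ×ℝ)×(ℝ×ℝ×ℝ)×(ℝ×ℝ×ℝ) => v.2.2.2.1)
      ((((ContinuousLinearMap.fst ℝ ℝ ℝ).comp (ContinuousLinearMap.snd ℝ ℝ (ℝ×ℝ))).comp (ContinuousLinearMap.snd ℝ (ℝ×ℝ×ℝ) (ℝ×ℝ×ℝ))).comp (ContinuousLinearMap.snd ℝ (ℝ×ℝ×ℝ) ((ℝ×ℝ×ℝ)×(ℝ×ℝ×ℝ)))) v :=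
    ((((ContinuousLinearMap.fst ℝ ℝ ℝ).comp (ContinuousLinearMap.snd ℝ ℝ (ℝ×ℝ))).comp (ContinuousLinearMap.snd ℝ (ℝ×ℝ×ℝ) (ℝ×ℝ×ℝ))).comp (ContinuousLinearMap.snd ℝ (ℝ×ℝ×ℝ) ((ℝ×ℝ×ℝ)×(ℝ×ℝ×ℝ)))).hasFDerivAt
  have hq1 := (((hw1.mul hw1).sub (hw2.mul hw2)).add ha1).sub hb2
  have hq2 := (((hw1.const_mul 2).mul hw2).add ha2).add hb1
  have hK := (hq1.mul hq1).add (hq2.mul hq2)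
  have hKeq : Kfun = fun v : (ℝ×ℝ×ℝ)×(ℝ×ℝ×ℝ)×(ℝ×ℝ×ℝ) =>
      (v.1.1 * v.1.1 - v.1.2.1 * v.1.2.1 + v.2.1.1 - v.2.2.2.1) *
        (v.1.1 * v.1.1 - v.1.2.1 * v.1.2.1 + v.2.1.1 - v.2.2.2.1) +
      (2 * v.1.1 * v.1.2.1 + v.2.1.2.1 + v.2.2.1) *
        (2 * v.1.1 * v.1.2.1 + v.2.1.2.1 + v.2.2.1) := by
    funext v; simp only [Kfun]; ring
  rw [hKeq]; erw [hK.fderiv]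
  simp only [kowField, cross3, ContinuousLinearMap.add_apply, ContinuousLinearMap.sub_apply,
    ContinuousLinearMap.smul_apply, ContinuousLinearMap.comp_apply,
    ContinuousLinearMap.coe_fst', ContinuousLinearMap.coe_snd', smul_eq_mul,
    Pi.mul_apply, Pi.add_apply, Pi.sub_apply]
  ring
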